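/- Let m ≥ 2 and let G be the complete bipartite graph K_{m,m}, with vertex set V = (Fin m) ⊕ (Fin m) and two vertices adjacent exactly when they lie in different summands. Then for any edge uv (u in the first part and v in the second part), the class of the vector e_u − e_v in the critical group K(G) has additive order exactly m². -/

import Mathlib

open Finset

/-- The subgroup of integer vectors whose coordinates sum to zero. -/
def sumZero (V : Type*) [Fintype V] : AddSubgroup (V → ℤ) where
  carrier := {x | ∑ v, x v = 0}
  add_mem' {a b} ha hb := by
    simp only [Set.mem_setOf_eq] at *
    simp [Finset.sum_add_distrib, ha, hb]
  zero_mem' := by simp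
  neg_mem' {a} ha := by
    simp only [Set.mem_setOf_eq] at *
    simp [ha]

/-- The ℤ-span of the rows of an integer matrix, as an additive subgroup of `V → ℤ`. -/
def rowSpan {V : Type*} [Fintype V] (L : Matrix V V ℤ) : AddSubgroup (V → ℤ) :=
  (Submodule.span ℤ (Set.range fun w => L w)).toAddSubgroup

/-- The critical group of a graph: the quotient of the sum-zero vectors by the
row span of the Laplacian. -/
def critGroup {V : Type*} [Fintype V] [DecidableEq V] (G : SimpleGraph V)
    [DecidableRel G.Adj] :=
  sumZero V ⧸ (rowSpan (G.lapMatrix ℤ)).addSubgroupOf (sumZero V)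

noncomputable instance {V : Type*} [Fintype V] [DecidableEq V] (G : SimpleGraph V)
    [DecidableRel G.Adj] : AddCommGroup (critGroup G) :=
  QuotientAddGroup.Quotient.addCommGroup _

/-- The vector `e_u - e_v`, as an element of the sum-zero subgroup. -/
def chipDiff {V : Type*} [Fintype V] [DecidableEq V] (u v : V) : sumZero V :=
  ⟨Pi.single u 1 - Pi.single v 1, by
    show ∑ w, (Pi.single u 1 - Pi.single v 1 : V → ℤ) w = 0
    simp [Finset.sum_sub_distrib, Finset.sum_pi_single]⟩


instance {V W : Type*} : DecidableRel (completeBipartiteGraph V W).Adj := fun a b =>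
  inferInstanceAs (Decidable (a.isLeft ∧ b.isRight ∨ a.isRight ∧ b.isLeft))

/-- Explicit formula for the rows of the Laplacian of `K_{m,m}`. -/
def row (m : ℕ) : (Fin m ⊕ Fin m) → (Fin m ⊕ Fin m) → ℤ :=
  Sum.elim (fun i => Sum.elim (fun i' => if i = i' then (m:ℤ) else 0) (fun _ => -1))
           (fun j => Sum.elim (fun _ => -1) (fun j' => if j = j' then (m:ℤ) else 0))

lemma deg_inl (m : ℕ) (i : Fin m) :
    (completeBipartiteGraph (Fin m) (Fin m)).degree (Sum.inl i) = m := by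
  rw [SimpleGraph.degree, show (completeBipartiteGraph (Fin m) (Fin m)).neighborFinset (Sum.inl i)
    = (∅ : Finset (Fin m)).disjSum Finset.univ by ext w; cases w <;> simp]
  simp

lemma deg_inr (m : ℕ) (j : Fin m) :
    (completeBipartiteGraph (Fin m) (Fin m)).degree (Sum.inr j) = m := by
  rw [SimpleGraph.degree, show (completeBipartiteGraph (Fin m) (Fin m)).neighborFinset (Sum.inr j)
    = (Finset.univ : Finset (Fin m)).disjSum ∅ by ext w; cases w <;> simp]
  simp

lemma lap_eq (m : ℕ) (w : Fin m ⊕ Fin m) :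
    (completeBipartiteGraph (Fin m) (Fin m)).lapMatrix ℤ w = row m w := by
  funext w'
  cases w <;> cases w' <;>
    simp [SimpleGraph.lapMatrix, SimpleGraph.degMatrix, SimpleGraph.adjMatrix, row,
      deg_inl, deg_inr, Sum.inl.injEq, Sum.inr.injEq] <;>
  · rename_i a b
    by_cases h : a = b <;> simp [h, deg_inl, deg_inr]

set_option linter.unnecessarySeqFocus false in
lemma key (m : ℕ) (hm : 2 ≤ m) (u v : Fin m) (k : ℤ) :
    k • (Pi.single (Sum.inl u) 1 - Pi.single (Sum.inr v) 1 : (Fin m ⊕ Fin m) → ℤ)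
      ∈ Submodule.span ℤ (Set.range (row m)) ↔ (m:ℤ)^2 ∣ k := by
  rw [Submodule.mem_span_range_iff_exists_fun]
  constructor
  · rintro ⟨c, hc⟩
    set B := ∑ j, c (Sum.inr j) with hB
    set A := ∑ i, c (Sum.inl i) with hA
    have E1 : ∀ i : Fin m, c (Sum.inl i) * (m:ℤ) - B
        = (if i = u then k else 0) := by
      intro i
      have h := congrFun hc (Sum.inl i)
      simp only [Finset.sum_apply, Pi.smul_apply, smul_eq_mul, Fintype.sum_sum_type, row,
        Sum.elim_inl, Sum.elim_inr, Pi.sub_apply, Pi.single_apply, mul_ite, mul_zero, mul_one,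
        Finset.sum_ite_eq', Finset.mem_univ, if_true, mul_neg, reduceCtorEq, if_false,
        Sum.inl.injEq, Sum.inr.injEq, Finset.sum_neg_distrib, sub_zero] at h
      rw [← hB] at h
      linarith [h]
    have E2 : ∀ j : Fin m, c (Sum.inr j) * (m:ℤ) - A
        = -(if j = v then k else 0) := by
      intro j
      have h := congrFun hc (Sum.inr j)
      simp only [Finset.sum_apply, Pi.smul_apply, smul_eq_mul, Fintype.sum_sum_type, row,
        Sum.elim_inl, Sum.elim_inr, Pi.sub_apply, Pi.single_apply, mul_ite, mul_zero, mul_one,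
        Finset.sum_ite_eq', Finset.mem_univ, if_true, mul_neg, reduceCtorEq, if_false,
        Sum.inl.injEq, Sum.inr.injEq, Finset.sum_neg_distrib, zero_sub] at h
      rw [← hA] at h
      linarith [h]
    have hsum : A * (m:ℤ) - (m:ℤ) * B = k := by
      have := Finset.sum_congr rfl (fun i (_ : i ∈ (Finset.univ : Finset (Fin m))) => E1 i)
      simpa [Finset.sum_sub_distrib, ← Finset.sum_mul, Finset.sum_const, Finset.card_univ,
        Fintype.card_fin, nsmul_eq_mul, mul_ite, mul_one, mul_zero, Finset.sum_ite_eq',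
        ← hA] using this
    haveI : Nontrivial (Fin m) := Fin.nontrivial_iff_two_le.mpr hm
    obtain ⟨i₀, hi₀⟩ := exists_ne u
    obtain ⟨j₀, hj₀⟩ := exists_ne v
    have h1 := E1 i₀
    have h2 := E2 j₀
    rw [if_neg hi₀] at h1
    rw [if_neg hj₀] at h2
    refine ⟨c (Sum.inr j₀) - c (Sum.inl i₀), ?_⟩
    have : B = c (Sum.inl i₀) * m := by linarith
    have : A = c (Sum.inr j₀) * m := by linarith
    nlinarith [hsum]
  · rintro ⟨t, rfl⟩
    refine ⟨Sum.elim (fun i => if i = u then (m:ℤ)*t else 0)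
      (fun j => t - if j = v then (m:ℤ)*t else 0), ?_⟩
    funext w
    cases w with
    | inl i =>
      simp only [Finset.sum_apply, Pi.smul_apply, smul_eq_mul, Fintype.sum_sum_type, row,
        Sum.elim_inl, Sum.elim_inr, Pi.sub_apply, Pi.single_apply, mul_ite, mul_zero,
        Finset.sum_ite_eq', Finset.mem_univ, if_true, mul_neg, mul_one,
        Sum.inl.injEq, Sum.inr.injEq, ite_mul, zero_mul, Finset.sum_sub_distrib,
        Finset.sum_const, Finset.card_univ, Fintype.card_fin, nsmul_eq_mul]
      by_cases h : i = u <;> simp [h] <;> ring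
    | inr j =>
      simp only [Finset.sum_apply, Pi.smul_apply, smul_eq_mul, Fintype.sum_sum_type, row,
        Sum.elim_inl, Sum.elim_inr, Pi.sub_apply, Pi.single_apply, mul_ite, mul_zero,
        Finset.sum_ite_eq', Finset.mem_univ, if_true, mul_neg, mul_one,
        Sum.inl.injEq, Sum.inr.injEq, ite_mul, zero_mul, Finset.sum_sub_distrib,
        Finset.sum_const, Finset.card_univ, Fintype.card_fin, nsmul_eq_mul]
      by_cases h : j = v <;> simp [h] <;> ring

theorem stmt4 (m : ℕ) (hm : 2 ≤ m) (u v : Fin m) :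
    addOrderOf ((QuotientAddGroup.mk
      (chipDiff (Sum.inl u) (Sum.inr v) :
        sumZero (Fin m ⊕ Fin m))) :
      critGroup (completeBipartiteGraph (Fin m) (Fin m))) = m ^ 2 := by
  set x : sumZero (Fin m ⊕ Fin m) := chipDiff (Sum.inl u) (Sum.inr v) with hx
  set g : critGroup (completeBipartiteGraph (Fin m) (Fin m)) := QuotientAddGroup.mk x with hg
  have hchar : ∀ n : ℕ, n • g = 0 ↔ (m:ℤ)^2 ∣ (n:ℤ) := by
    intro n
    rw [hg]
    change n • (QuotientAddGroup.mk x : sumZero (Fin m ⊕ Fin m) ⧸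
      (rowSpan ((completeBipartiteGraph (Fin m) (Fin m)).lapMatrix ℤ)).addSubgroupOf
        (sumZero (Fin m ⊕ Fin m))) = 0 ↔ _
    rw [← QuotientAddGroup.mk_nsmul, QuotientAddGroup.eq_zero_iff,
      AddSubgroup.mem_addSubgroupOf]
    have hco : ((n • x : sumZero (Fin m ⊕ Fin m)) : (Fin m ⊕ Fin m) → ℤ)
        = (n : ℤ) • (Pi.single (Sum.inl u) 1 - Pi.single (Sum.inr v) 1) := by
      rw [hx]
      push_cast
      simp [chipDiff, natCast_zsmul]
    rw [hco]
    have hrange : (Set.range fun w => (completeBipartiteGraph (Fin m) (Fin m)).lapMatrix ℤ w)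
        = Set.range (row m) := by
      exact congrArg Set.range (funext (lap_eq m))
    rw [rowSpan]
    rw [Submodule.mem_toAddSubgroup, hrange]
    exact key m hm u v (n : ℤ)
  have h1 : (m ^ 2 : ℕ) • g = 0 := (hchar _).mpr (by push_cast; exact dvd_refl _)
  have h2 : addOrderOf g ∣ m ^ 2 := addOrderOf_dvd_of_nsmul_eq_zero h1
  have h3 : (m:ℤ)^2 ∣ (addOrderOf g : ℤ) := (hchar _).mp (addOrderOf_nsmul_eq_zero g)
  have h4 : m ^ 2 ∣ addOrderOf g := by exact_mod_cast (by push_cast at h3 ⊢; exact h3 :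
    ((m ^ 2 : ℕ) : ℤ) ∣ (addOrderOf g : ℤ))
  exact Nat.dvd_antisymm h2 h4
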